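/- Let H be a real Hilbert space and let A, B ⊆ H be nonempty closed convex sets. If x ∉ A and R_B(R_A(x)) = x, then the midpoint (x + R_A(x))/2 is the unique circumcenter of x with respect to (A, B), and it satisfies (x + R_A(x))/2 = P_A(x) = P_B(R_A(x)); in particular this circumcenter lies in A ∩ B. -/

import Mathlib

open RealInnerProductSpace Pointwise

/-- `p` is the metric projection of `x` onto `C`: the point of `C` such that
`⟪y - p, x - p⟫ ≤ 0` for all `y ∈ C`. -/
def IsProj {E : Type*} [NormedAddCommGroup E] [InnerProductSpace ℝ E]
    (C : Set E) (x p : E) : Prop :=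
  p ∈ C ∧ ∀ y ∈ C, ⟪y - p, x - p⟫ ≤ 0

/-- `c` is a circumcenter of `x` with respect to `(A, B)`: writing `R_A x = 2 P_A x - x`
and `R_B (R_A x) = 2 P_B (R_A x) - R_A x`, the point `c` lies in the affine span of
`{x, R_A x, R_B (R_A x)}` and is equidistant from these three points. -/
def IsCircumcenter {E : Type*} [NormedAddCommGroup E] [InnerProductSpace ℝ E]
    (A B : Set E) (x c : E) : Prop :=
  ∃ pa pb : E, IsProj A x pa ∧ IsProj B ((2 : ℝ) • pa - x) pb ∧
    c ∈ affineSpan ℝ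
      ({x, (2 : ℝ) • pa - x, (2 : ℝ) • pb - ((2 : ℝ) • pa - x)} : Set E) ∧
    ‖c - x‖ = ‖c - ((2 : ℝ) • pa - x)‖ ∧
    ‖c - x‖ = ‖c - ((2 : ℝ) • pb - ((2 : ℝ) • pa - x))‖

/-- Uniqueness of the metric projection. -/
lemma isProj_unique {E : Type*} [NormedAddCommGroup E] [InnerProductSpace ℝ E]
    {C : Set E} {x p q : E} (hp : IsProj C x p) (hq : IsProj C x q) : p = q := by
  have h1 := hp.2 q hq.1
  have h2 := hq.2 p hp.1
  have hsum : ⟪q - p, q - p⟫ ≤ 0 := by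
    have : ⟪q - p, x - p⟫ + ⟪p - q, x - q⟫ ≤ 0 := add_nonpos h1 h2
    have heq : ⟪q - p, q - p⟫ = ⟪q - p, x - p⟫ + ⟪p - q, x - q⟫ := by
      have : ⟪p - q, x - q⟫ = -⟪q - p, x - q⟫ := by
        rw [← inner_neg_left]; congr 1; abel
      rw [this, ← sub_eq_add_neg, ← inner_sub_right]
      congr 1; abel
    linarith
  have : q - p = 0 := by
    have := real_inner_self_nonneg (x := q - p)
    have h0 : ⟪q - p, q - p⟫ = 0 := le_antisymm hsum this
    exact inner_self_eq_zero.mp h0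
  have := sub_eq_zero.mp this
  exact this.symm

theorem crm_step_two_cycle
    {H : Type*} [NormedAddCommGroup H] [InnerProductSpace ℝ H] [CompleteSpace H]
    (A B : Set H) (hAne : A.Nonempty) (hAcl : IsClosed A) (hAcv : Convex ℝ A)
    (hBne : B.Nonempty) (hBcl : IsClosed B) (hBcv : Convex ℝ B)
    (x pa pb : H) (hxA : x ∉ A) (hpa : IsProj A x pa)
    (hpb : IsProj B ((2 : ℝ) • pa - x) pb)
    (hfix : (2 : ℝ) • pb - ((2 : ℝ) • pa - x) = x) :
    (∀ c : H, IsCircumcenter A B x c ↔ c = (2 : ℝ)⁻¹ • (x + ((2 : ℝ) • pa - x))) ∧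
    (2 : ℝ)⁻¹ • (x + ((2 : ℝ) • pa - x)) = pa ∧
    (2 : ℝ)⁻¹ • (x + ((2 : ℝ) • pa - x)) = pb ∧
    (2 : ℝ)⁻¹ • (x + ((2 : ℝ) • pa - x)) ∈ A ∩ B := by
  have hpbpa : pb = pa := by
    have h2 : (2 : ℝ) • pb = (2 : ℝ) • pa := by
      have h := hfix
      rw [sub_eq_iff_eq_add] at h
      rw [h]; module
    exact smul_right_injective H two_ne_zero h2
  have hmid : (2 : ℝ)⁻¹ • (x + ((2 : ℝ) • pa - x)) = pa := by module
  have hpax : pa ≠ x := fun h => hxA (h ▸ hpa.1)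
  have hdne : (2 : ℝ) • pa - x - x ≠ 0 := by
    rw [show (2 : ℝ) • pa - x - x = (2 : ℝ) • (pa - x) by module]
    simp [sub_eq_zero, hpax]
  have hsetEq : ({x, (2 : ℝ) • pa - x, (2 : ℝ) • pb - ((2 : ℝ) • pa - x)} : Set H)
      = {x, (2 : ℝ) • pa - x} := by
    rw [hfix]
    ext z; simp; tauto
  refine ⟨fun c => ⟨?_, ?_⟩, hmid, hmid.trans hpbpa.symm, ?_⟩
  · rintro ⟨pa', pb', hpa', hpb', hspan, heq1, _⟩
    have e1 : pa' = pa := isProj_unique hpa' hpa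
    rw [e1] at hpb'
    have e2 : pb' = pb := isProj_unique hpb' hpb
    rw [e1, e2, hsetEq] at hspan
    rw [e1] at heq1
    have hce : (c - x) +ᵥ x = c := by rw [vadd_eq_add]; abel
    have hspan' : (c - x) +ᵥ x ∈ line[ℝ, x, (2 : ℝ) • pa - x] := by
      rw [hce]; exact hspan
    rw [vadd_left_mem_affineSpan_pair] at hspan'
    obtain ⟨r, hr⟩ := hspan'
    rw [vsub_eq_sub] at hr
    have hc : c = x + r • ((2 : ℝ) • pa - x - x) := by
      rw [hr]; abel
    have hn1 : c - x = r • ((2 : ℝ) • pa - x - x) := by rw [hc]; abel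
    have hn2 : c - ((2 : ℝ) • pa - x) = (r - 1) • ((2 : ℝ) • pa - x - x) := by
      rw [hc, sub_smul, one_smul]; abel
    rw [hn1, hn2, norm_smul, norm_smul] at heq1
    have hnd : ‖(2 : ℝ) • pa - x - x‖ ≠ 0 := norm_ne_zero_iff.mpr hdne
    have habs : |r| = |r - 1| := by
      rw [Real.norm_eq_abs, Real.norm_eq_abs] at heq1
      exact mul_right_cancel₀ hnd heq1
    have hr2 : r = 1 / 2 := by
      have := sq_abs r
      have := sq_abs (r - 1)
      nlinarith [sq_abs r, sq_abs (r - 1), congrArg (fun t => t ^ 2) habs]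
    rw [hc, hr2, hmid]
    module
  · rintro rfl
    refine ⟨pa, pb, hpa, hpb, ?_, ?_, ?_⟩
    · have hmm := smul_vsub_vadd_mem_affineSpan_pair ((2 : ℝ)⁻¹) x ((2 : ℝ) • pa - x)
      have heqp : (2 : ℝ)⁻¹ • (((2 : ℝ) • pa - x) -ᵥ x) +ᵥ x
          = (2 : ℝ)⁻¹ • (x + ((2 : ℝ) • pa - x)) := by
        rw [vsub_eq_sub, vadd_eq_add]; module
      rw [hsetEq, ← heqp]
      exact hmm
    · rw [hmid]
      rw [show pa - ((2 : ℝ) • pa - x) = -(pa - x) by module, norm_neg]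
    · rw [hfix]
  · rw [hmid]
    exact ⟨hpa.1, hpbpa ▸ hpb.1⟩
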